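/- Let X and Y be real normed vector spaces, L ≥ 0, Ω ⊆ X a convex set, and f : X → Y a function. Suppose f is pointwise Lipschitz on Ω with uniform constant L; that is, for every x₀ ∈ Ω there exists r > 0 such that ‖f(x) − f(x₀)‖ ≤ L‖x − x₀‖ for every x ∈ Ω with ‖x − x₀‖ ≤ r. Then f is Lipschitz on Ω with constant L: ‖f(x₁) − f(x₂)‖ ≤ L‖x₁ − x₂‖ for all x₁, x₂ ∈ Ω. -/

import Mathlib

/-- If `f` is pointwise Lipschitz on a convex set `Ω` with uniform constant `L`,
then `f` is Lipschitz on `Ω` with constant `L`. -/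
theorem pointwise_lipschitz_of_convex
    {X Y : Type*} [NormedAddCommGroup X] [NormedSpace ℝ X]
    [NormedAddCommGroup Y] [NormedSpace ℝ Y]
    (L : ℝ) (hL : 0 ≤ L) (Ω : Set X) (hΩ : Convex ℝ Ω) (f : X → Y)
    (h : ∀ x₀ ∈ Ω, ∃ r > 0, ∀ x ∈ Ω, ‖x - x₀‖ ≤ r → ‖f x - f x₀‖ ≤ L * ‖x - x₀‖) :
    ∀ x₁ ∈ Ω, ∀ x₂ ∈ Ω, ‖f x₁ - f x₂‖ ≤ L * ‖x₁ - x₂‖ := by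
  intro x₁ hx₁ x₂ hx₂
  set d : ℝ := ‖x₁ - x₂‖ with hd
  rcases eq_or_lt_of_le (norm_nonneg (x₁ - x₂)) with hd0 | hd0
  · have : x₁ = x₂ := by
      have := sub_eq_zero.mp (norm_eq_zero.mp hd0.symm)
      exact this
    rw [this, sub_self, norm_zero]; positivity
  -- the segment
  set γ : ℝ → X := fun t => x₁ + t • (x₂ - x₁) with hγ
  have hγ0 : γ 0 = x₁ := by simp [hγ]
  have hγ1 : γ 1 = x₂ := by simp [hγ]
  have hγmem : ∀ t ∈ Set.Icc (0:ℝ) 1, γ t ∈ Ω := by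
    intro t ht
    have := hΩ hx₁ hx₂ (by linarith [ht.2] : (0:ℝ) ≤ 1 - t) ht.1 (by ring)
    convert this using 1
    simp only [hγ, smul_sub, sub_smul, one_smul]
    abel
  have hγdist : ∀ s t : ℝ, ‖γ t - γ s‖ = |t - s| * d := by
    intro s t
    have : γ t - γ s = (t - s) • (x₂ - x₁) := by
      simp only [hγ, sub_smul]; abel
    rw [this, norm_smul, Real.norm_eq_abs, hd, norm_sub_rev]
  set S : Set ℝ := {t : ℝ | t ∈ Set.Icc (0:ℝ) 1 ∧ ‖f (γ t) - f x₁‖ ≤ L * t * d} with hS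
  have h0S : (0:ℝ) ∈ S := by
    constructor
    · exact ⟨le_refl 0, zero_le_one⟩
    · simp [hγ0]
  have hne : S.Nonempty := ⟨0, h0S⟩
  have hbdd : BddAbove S := ⟨1, fun t ht => ht.1.2⟩
  set c : ℝ := sSup S with hc
  have hc0 : 0 ≤ c := le_csSup hbdd h0S
  have hc1 : c ≤ 1 := csSup_le hne (fun t ht => ht.1.2)
  have hcIcc : c ∈ Set.Icc (0:ℝ) 1 := ⟨hc0, hc1⟩
  obtain ⟨r, hr, hloc⟩ := h (γ c) (hγmem c hcIcc)
  -- c ∈ S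
  have hcS : c ∈ S := by
    have hδ : 0 < r / d := div_pos hr hd0
    obtain ⟨t, htS, htlt⟩ := exists_lt_of_lt_csSup hne (show c - r / d < c by linarith)
    have htle : t ≤ c := le_csSup hbdd htS
    have hdist : ‖γ c - γ t‖ ≤ r := by
      rw [hγdist]
      have : |c - t| = c - t := abs_of_nonneg (by linarith)
      rw [this]
      calc (c - t) * d ≤ (r / d) * d := by nlinarith
        _ = r := by rw [div_mul_cancel₀]; exact hd0.ne'
    have hloc1 := hloc (γ t) (hγmem t htS.1) (by rw [hγdist]; rw [hγdist] at hdist; rwa [abs_sub_comm])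
    refine ⟨hcIcc, ?_⟩
    calc ‖f (γ c) - f x₁‖ ≤ ‖f (γ c) - f (γ t)‖ + ‖f (γ t) - f x₁‖ := norm_sub_le_norm_sub_add_norm_sub _ _ _
      _ ≤ L * ‖γ t - γ c‖ + L * t * d := by
          have := htS.2
          have h2 : ‖f (γ c) - f (γ t)‖ ≤ L * ‖γ t - γ c‖ := by
            rw [norm_sub_rev]; exact hloc1
          linarith
      _ ≤ L * ((c - t) * d) + L * t * d := by
          rw [hγdist]
          have : |t - c| = c - t := by rw [abs_sub_comm]; exact abs_of_nonneg (by linarith)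
          rw [this]
      _ = L * c * d := by ring
  -- c = 1
  have hceq : c = 1 := by
    by_contra hne1
    have hclt : c < 1 := lt_of_le_of_ne hc1 hne1
    set t : ℝ := min 1 (c + r / d) with ht
    have hδ : 0 < r / d := div_pos hr hd0
    have htgt : c < t := lt_min hclt (by linarith)
    have htIcc : t ∈ Set.Icc (0:ℝ) 1 := ⟨by linarith, min_le_left _ _⟩
    have hdist : ‖γ t - γ c‖ ≤ r := by
      rw [hγdist]
      have h1 : |t - c| = t - c := abs_of_nonneg (by linarith)
      rw [h1]
      have h2 : t ≤ c + r / d := min_le_right _ _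
      calc (t - c) * d ≤ (r / d) * d := by nlinarith
        _ = r := by rw [div_mul_cancel₀]; exact hd0.ne'
    have hloc1 := hloc (γ t) (hγmem t htIcc) hdist
    have htS : t ∈ S := by
      refine ⟨htIcc, ?_⟩
      calc ‖f (γ t) - f x₁‖ ≤ ‖f (γ t) - f (γ c)‖ + ‖f (γ c) - f x₁‖ := norm_sub_le_norm_sub_add_norm_sub _ _ _
        _ ≤ L * ((t - c) * d) + L * c * d := by
            have h2 := hcS.2
            have h3 : ‖f (γ t) - f (γ c)‖ ≤ L * ((t - c) * d) := by
              have := hloc1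
              rw [hγdist] at this
              rwa [abs_of_nonneg (by linarith : (0:ℝ) ≤ t - c)] at this
            linarith
        _ = L * t * d := by ring
    exact absurd (le_csSup hbdd htS) (not_le.mpr htgt)
  have := hcS.2
  rw [hceq, hγ1] at this
  rw [norm_sub_rev]
  linarith [this]
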